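/- If f(a,c) = s·ln(m·e^{μa} + n·e^{νc}) + const with s, m, n, μ, ν nonzero constants, then f satisfies the five integrability conditions: f_{aaa} = f_{aa}(f_{ac}/f_c + f_{aa}/f_a), f_{aac} = f_{aa}(f_{cc}/f_c + f_{ac}/f_a), f_{acc} = f_{cc}(f_{cc}/f_c + f_{ac}/f_a) (with appropriate index symmetry), f_{ccc} = f_{cc}(f_{cc}/f_c + f_{ac}/f_a), and f_{aa}·f_{cc} = (f_{ac})². -/

import Mathlib

set_option maxHeartbeats 2000000


/-- Partial derivative with respect to the first variable. -/
noncomputable def Dx (f : ℝ → ℝ → ℝ) (a c : ℝ) : ℝ := deriv (fun x => f x c) a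

/-- Partial derivative with respect to the second variable. -/
noncomputable def Dy (f : ℝ → ℝ → ℝ) (a c : ℝ) : ℝ := deriv (fun y => f a y) c

private lemma expDeriv (k x : ℝ) :
    HasDerivAt (fun t : ℝ => Real.exp (k * t)) (k * Real.exp (k * x)) x := by
  simpa [mul_comm] using ((hasDerivAt_id x).const_mul k).exp

/-- `f(a,c) = s·ln(m·e^{μa} + n·e^{νc}) + K` satisfies the five
integrability conditions of Sect. 3.1 wherever `f_a ≠ 0` and `f_c ≠ 0`. -/
theorem integrability_conditions_of_log_exp_sum
    (s m n μ ν K : ℝ) (hs : s ≠ 0) (hm : m ≠ 0) (hn : n ≠ 0) (hμ : μ ≠ 0) (hν : ν ≠ 0)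
    (f : ℝ → ℝ → ℝ)
    (hf : ∀ a c, f a c = s * Real.log (m * Real.exp (μ * a) + n * Real.exp (ν * c)) + K)
    (hpos : ∀ a c, 0 < m * Real.exp (μ * a) + n * Real.exp (ν * c))
    (a c : ℝ) (hfa : Dx f a c ≠ 0) (hfc : Dy f a c ≠ 0) :
    Dx (Dx (Dx f)) a c
        = Dx (Dx f) a c * (Dy (Dx f) a c / Dy f a c + Dx (Dx f) a c / Dx f a c) ∧
    Dy (Dx (Dx f)) a c
        = Dx (Dx f) a c * (Dy (Dy f) a c / Dy f a c + Dy (Dx f) a c / Dx f a c) ∧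
    Dy (Dy (Dx f)) a c
        = Dy (Dy f) a c * (Dx (Dx f) a c / Dx f a c + Dy (Dx f) a c / Dy f a c) ∧
    Dy (Dy (Dy f)) a c
        = Dy (Dy f) a c * (Dy (Dy f) a c / Dy f a c + Dy (Dx f) a c / Dx f a c) ∧
    Dx (Dx f) a c * Dy (Dy f) a c = (Dy (Dx f) a c)^2 := by
  clear hfa hfc
  have hg : ∀ a c : ℝ, m * Real.exp (μ * a) + n * Real.exp (ν * c) ≠ 0 :=
    fun a c => (hpos a c).ne'
  have hGa : ∀ a c : ℝ,
      HasDerivAt (fun x => m * Real.exp (μ * x) + n * Real.exp (ν * c))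
        (μ * m * Real.exp (μ * a)) a := by
    intro a c
    have h := ((expDeriv μ a).const_mul m).add_const (n * Real.exp (ν * c))
    convert h using 1 <;> first | rfl | ring
  have hGc : ∀ a c : ℝ,
      HasDerivAt (fun y => m * Real.exp (μ * a) + n * Real.exp (ν * y))
        (ν * n * Real.exp (ν * c)) c := by
    intro a c
    have h := (((expDeriv ν c).const_mul n)).const_add (m * Real.exp (μ * a))
    convert h using 1 <;> first | rfl | ring
  -- first derivatives
  have h1x : Dx f = fun a c =>
      s * μ * m * Real.exp (μ * a) / (m * Real.exp (μ * a) + n * Real.exp (ν * c)) := by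
    funext a c
    have hfun : (fun x => f x c)
        = (fun x => s * Real.log (m * Real.exp (μ * x) + n * Real.exp (ν * c)) + K) :=
      funext fun x => hf x c
    have h := (((hGa a c).log (hg a c)).const_mul s).add_const K
    unfold Dx
    rw [hfun, h.deriv]
    ring
  have h1y : Dy f = fun a c =>
      s * ν * n * Real.exp (ν * c) / (m * Real.exp (μ * a) + n * Real.exp (ν * c)) := by
    funext a c
    have hfun : (fun y => f a y)
        = (fun y => s * Real.log (m * Real.exp (μ * a) + n * Real.exp (ν * y)) + K) :=
      funext fun y => hf a y
    have h := (((hGc a c).log (hg a c)).const_mul s).add_const K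
    unfold Dy
    rw [hfun, h.deriv]
    ring
  -- second derivatives
  have h2xx : Dx (Dx f) = fun a c =>
      s * μ^2 * m * n * Real.exp (μ * a) * Real.exp (ν * c)
        / (m * Real.exp (μ * a) + n * Real.exp (ν * c))^2 := by
    rw [h1x]; funext a c
    have hnum : HasDerivAt (fun x => s * μ * m * Real.exp (μ * x))
        (s * μ * m * (μ * Real.exp (μ * a))) a := (expDeriv μ a).const_mul (s * μ * m)
    have h := hnum.div (hGa a c) (hg a c)
    unfold Dx
    refine Eq.trans h.deriv ?_
    field_simp [hg a c, hs, hm, hn, hμ, hν, Real.exp_ne_zero]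
    ring
  have h2xy : Dy (Dx f) = fun a c =>
      -(s * μ * ν * m * n * Real.exp (μ * a) * Real.exp (ν * c))
        / (m * Real.exp (μ * a) + n * Real.exp (ν * c))^2 := by
    rw [h1x]; funext a c
    have hnum : HasDerivAt (fun _ : ℝ => s * μ * m * Real.exp (μ * a)) 0 c :=
      hasDerivAt_const _ _
    have h := hnum.div (hGc a c) (hg a c)
    unfold Dy
    refine Eq.trans h.deriv ?_
    field_simp [hg a c, hs, hm, hn, hμ, hν, Real.exp_ne_zero]
    ring
  have h2yy : Dy (Dy f) = fun a c =>
      s * ν^2 * m * n * Real.exp (μ * a) * Real.exp (ν * c)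
        / (m * Real.exp (μ * a) + n * Real.exp (ν * c))^2 := by
    rw [h1y]; funext a c
    have hnum : HasDerivAt (fun y => s * ν * n * Real.exp (ν * y))
        (s * ν * n * (ν * Real.exp (ν * c))) c := (expDeriv ν c).const_mul (s * ν * n)
    have h := hnum.div (hGc a c) (hg a c)
    unfold Dy
    refine Eq.trans h.deriv ?_
    field_simp [hg a c, hs, hm, hn, hμ, hν, Real.exp_ne_zero]
    ring
  -- third derivatives (pointwise)
  have h3xxx : Dx (Dx (Dx f)) a c =
      s * μ^3 * m * n * Real.exp (μ * a) * Real.exp (ν * c)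
        * (n * Real.exp (ν * c) - m * Real.exp (μ * a))
        / (m * Real.exp (μ * a) + n * Real.exp (ν * c))^3 := by
    rw [h2xx]
    have hnum : HasDerivAt (fun x => s * μ^2 * m * n * Real.exp (μ * x) * Real.exp (ν * c))
        (s * μ^2 * m * n * (μ * Real.exp (μ * a)) * Real.exp (ν * c)) a :=
      ((expDeriv μ a).const_mul (s * μ^2 * m * n)).mul_const _
    have hden := (hGa a c).pow 2
    have h := hnum.div hden (pow_ne_zero 2 (hg a c))
    unfold Dx
    refine Eq.trans h.deriv ?_
    simp only [Pi.pow_apply]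
    field_simp [hg a c, hs, hm, hn, hμ, hν, Real.exp_ne_zero]
    ring
  have h3xxy : Dy (Dx (Dx f)) a c =
      s * μ^2 * ν * m * n * Real.exp (μ * a) * Real.exp (ν * c)
        * (m * Real.exp (μ * a) - n * Real.exp (ν * c))
        / (m * Real.exp (μ * a) + n * Real.exp (ν * c))^3 := by
    rw [h2xx]
    have hnum : HasDerivAt (fun y => s * μ^2 * m * n * Real.exp (μ * a) * Real.exp (ν * y))
        (s * μ^2 * m * n * Real.exp (μ * a) * (ν * Real.exp (ν * c))) c := by
      have := (expDeriv ν c).const_mul (s * μ^2 * m * n * Real.exp (μ * a))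
      convert this using 1
      try ring
    have hden := (hGc a c).pow 2
    have h := hnum.div hden (pow_ne_zero 2 (hg a c))
    unfold Dy
    refine Eq.trans h.deriv ?_
    simp only [Pi.pow_apply]
    field_simp [hg a c, hs, hm, hn, hμ, hν, Real.exp_ne_zero]
    ring
  have h3xyy : Dy (Dy (Dx f)) a c =
      s * μ * ν^2 * m * n * Real.exp (μ * a) * Real.exp (ν * c)
        * (n * Real.exp (ν * c) - m * Real.exp (μ * a))
        / (m * Real.exp (μ * a) + n * Real.exp (ν * c))^3 := by
    rw [h2xy]
    have hnum : HasDerivAt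
        (fun y => -(s * μ * ν * m * n * Real.exp (μ * a) * Real.exp (ν * y)))
        (-(s * μ * ν * m * n * Real.exp (μ * a) * (ν * Real.exp (ν * c)))) c := by
      have := ((expDeriv ν c).const_mul (s * μ * ν * m * n * Real.exp (μ * a))).neg
      convert this using 1
      all_goals first | rfl | ring
    have hden := (hGc a c).pow 2
    have h := hnum.div hden (pow_ne_zero 2 (hg a c))
    unfold Dy
    refine Eq.trans h.deriv ?_
    simp only [Pi.pow_apply]
    field_simp [hg a c, hs, hm, hn, hμ, hν, Real.exp_ne_zero]
    ring
  have h3yyy : Dy (Dy (Dy f)) a c =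
      s * ν^3 * m * n * Real.exp (μ * a) * Real.exp (ν * c)
        * (m * Real.exp (μ * a) - n * Real.exp (ν * c))
        / (m * Real.exp (μ * a) + n * Real.exp (ν * c))^3 := by
    rw [h2yy]
    have hnum : HasDerivAt (fun y => s * ν^2 * m * n * Real.exp (μ * a) * Real.exp (ν * y))
        (s * ν^2 * m * n * Real.exp (μ * a) * (ν * Real.exp (ν * c))) c := by
      have := (expDeriv ν c).const_mul (s * ν^2 * m * n * Real.exp (μ * a))
      convert this using 1
      try ring
    have hden := (hGc a c).pow 2
    have h := hnum.div hden (pow_ne_zero 2 (hg a c))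
    unfold Dy
    refine Eq.trans h.deriv ?_
    simp only [Pi.pow_apply]
    field_simp [hg a c, hs, hm, hn, hμ, hν, Real.exp_ne_zero]
    ring
  have hE := Real.exp_ne_zero (μ * a)
  have hF := Real.exp_ne_zero (ν * c)
  have hgac := hg a c
  refine ⟨?_, ?_, ?_, ?_, ?_⟩
  · rw [h3xxx, h2xx, h2xy, h1x, h1y]
    field_simp [hg a c, hs, hm, hn, hμ, hν, Real.exp_ne_zero]
    ring
  · rw [h3xxy, h2xx, h2xy, h2yy, h1x, h1y]
    field_simp [hg a c, hs, hm, hn, hμ, hν, Real.exp_ne_zero]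
    ring
  · rw [h3xyy, h2xx, h2xy, h2yy, h1x, h1y]
    field_simp [hg a c, hs, hm, hn, hμ, hν, Real.exp_ne_zero]
    ring
  · rw [h3yyy, h2xy, h2yy, h1x, h1y]
    field_simp [hg a c, hs, hm, hn, hμ, hν, Real.exp_ne_zero]
    ring
  · rw [h2xx, h2xy, h2yy]
    field_simp [hg a c, hs, hm, hn, hμ, hν, Real.exp_ne_zero]
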